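/- Let U ⊆ ℂ² be open and ρ : U → ℝ of class C² with ρ(z) > 0 and Levi matrix H(ρ)(z) positive definite at a point z ∈ U, and let Z(z) be the complex gradient of ρ at z. Then det H(log ρ)(z) = 0 (i.e. log ρ satisfies the homogeneous complex Monge–Ampère equation (dd^c log ρ)² = 0 at z) if and only if Z(ρ)(z) := Σ_μ Z^μ(z)·∂ρ/∂z_μ(z) = ρ(z). -/

import Mathlib

open Complex Matrix
open scoped ComplexOrder

/-- The Wirtinger derivative `∂f/∂z_μ` of an `ℝ`-differentiable function `f : ℂⁿ → ℂ`. -/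
noncomputable def wD {n : ℕ} (f : (Fin n → ℂ) → ℂ) (z : Fin n → ℂ) (μ : Fin n) : ℂ :=
  (1 / 2 : ℂ) *
    (fderiv ℝ f z (Pi.single μ 1) - Complex.I * fderiv ℝ f z (Pi.single μ Complex.I))

/-- The conjugate Wirtinger derivative `∂f/∂z̄_μ`. -/
noncomputable def wDbar {n : ℕ} (f : (Fin n → ℂ) → ℂ) (z : Fin n → ℂ) (μ : Fin n) : ℂ :=
  (1 / 2 : ℂ) *
    (fderiv ℝ f z (Pi.single μ 1) + Complex.I * fderiv ℝ f z (Pi.single μ Complex.I))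

/-- The Levi matrix `ρ_{μν̄} = ∂²ρ/∂z_μ∂z̄_ν` of a real-valued function `ρ : ℂⁿ → ℝ`. -/
noncomputable def levi {n : ℕ} (ρ : (Fin n → ℂ) → ℝ) (z : Fin n → ℂ) :
    Matrix (Fin n) (Fin n) ℂ :=
  Matrix.of fun μ ν => wD (fun w => wDbar (fun w' => (ρ w' : ℂ)) w ν) z μ

lemma wD_congr {n : ℕ} {f h : (Fin n → ℂ) → ℂ} {z : Fin n → ℂ}
    (hfh : f =ᶠ[nhds z] h) : wD f z = wD h z := by
  unfold wD; rw [hfh.fderiv_eq]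

lemma wD_ofReal {n : ℕ} {u : (Fin n → ℂ) → ℝ} {u' : (Fin n → ℂ) →L[ℝ] ℝ}
    {z : Fin n → ℂ} (h : HasFDerivAt u u' z) (μ : Fin n) :
    wD (fun x => (u x : ℂ)) z μ =
      (1 / 2 : ℂ) * ((u' (Pi.single μ 1) : ℂ) - Complex.I * (u' (Pi.single μ Complex.I) : ℂ)) := by
  have hc : HasFDerivAt (fun x => ((u x : ℂ))) (Complex.ofRealCLM.comp u') z :=
    Complex.ofRealCLM.hasFDerivAt.comp z h
  unfold wD
  rw [hc.fderiv]
  simp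

lemma wDbar_ofReal {n : ℕ} {u : (Fin n → ℂ) → ℝ} {u' : (Fin n → ℂ) →L[ℝ] ℝ}
    {z : Fin n → ℂ} (h : HasFDerivAt u u' z) (μ : Fin n) :
    wDbar (fun x => (u x : ℂ)) z μ =
      (1 / 2 : ℂ) * ((u' (Pi.single μ 1) : ℂ) + Complex.I * (u' (Pi.single μ Complex.I) : ℂ)) := by
  have hc : HasFDerivAt (fun x => ((u x : ℂ))) (Complex.ofRealCLM.comp u') z :=
    Complex.ofRealCLM.hasFDerivAt.comp z h
  unfold wDbar
  rw [hc.fderiv]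
  simp

lemma wD_mul {n : ℕ} {f h : (Fin n → ℂ) → ℂ} {z : Fin n → ℂ}
    (hf : DifferentiableAt ℝ f z) (hh : DifferentiableAt ℝ h z) (μ : Fin n) :
    wD (fun w => f w * h w) z μ = wD f z μ * h z + f z * wD h z μ := by
  unfold wD
  rw [fderiv_fun_mul hf hh]
  simp [smul_eq_mul]
  ring

/-- The key computation: the Levi matrix of `log ρ` in terms of that of `ρ`. -/
lemma levi_log_entry (U : Set (Fin 2 → ℂ)) (hU : IsOpen U)
    (ρ : (Fin 2 → ℂ) → ℝ) (hρ : ContDiffOn ℝ 2 ρ U)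
    (z : Fin 2 → ℂ) (hz : z ∈ U) (hpos : 0 < ρ z) :
    ∀ μ ν : Fin 2, (levi (fun w => Real.log (ρ w)) z) μ ν =
      (ρ z : ℂ)⁻¹ * levi ρ z μ ν
        - ((ρ z : ℂ) ^ 2)⁻¹ * wD (fun w => (ρ w : ℂ)) z μ * wDbar (fun w => (ρ w : ℂ)) z ν := by
  -- the good neighborhood
  set V : Set (Fin 2 → ℂ) := U ∩ ρ ⁻¹' Set.Ioi 0 with hVdef
  have hV : IsOpen V := hρ.continuousOn.isOpen_inter_preimage hU isOpen_Ioi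
  have hzV : z ∈ V := ⟨hz, hpos⟩
  have hmem : V ∈ nhds z := hV.mem_nhds hzV
  -- differentiability of ρ on V
  have hdiff : ∀ w ∈ V, DifferentiableAt ℝ ρ w := fun w hw => by
    have := (hρ.differentiableOn (by norm_num)).differentiableAt (hU.mem_nhds hw.1)
    exact this
  have hρz : HasFDerivAt ρ (fderiv ℝ ρ z) z := (hdiff z hzV).hasFDerivAt
  -- the fderiv map is differentiable at z
  have hCD : ContDiffAt ℝ 2 ρ z := hρ.contDiffAt (hU.mem_nhds hz)
  have hD1 : DifferentiableAt ℝ (fderiv ℝ ρ) z := by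
    have := (hCD.fderiv_right (m := 1) (by norm_num)).differentiableAt (by norm_num)
    exact this
  set D : (Fin 2 → ℂ) → ((Fin 2 → ℂ) →L[ℝ] ℝ) := fderiv ℝ ρ with hDdef
  -- auxiliary smooth representatives
  set B : Fin 2 → (Fin 2 → ℂ) → ℂ := fun ν w =>
    (1 / 2 : ℂ) * ((D w (Pi.single ν 1) : ℂ) + Complex.I * (D w (Pi.single ν Complex.I) : ℂ))
    with hBdef
  have hBdiff : ∀ ν, DifferentiableAt ℝ (B ν) z := by
    intro ν
    have h1 : DifferentiableAt ℝ (fun w => D w (Pi.single ν (1:ℂ))) z :=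
      hD1.clm_apply (differentiableAt_const _)
    have h2 : DifferentiableAt ℝ (fun w => D w (Pi.single ν Complex.I)) z :=
      hD1.clm_apply (differentiableAt_const _)
    have h1' : DifferentiableAt ℝ (fun w => ((D w (Pi.single ν (1:ℂ)) : ℝ) : ℂ)) z :=
      Complex.ofRealCLM.differentiable.differentiableAt.comp z h1
    have h2' : DifferentiableAt ℝ (fun w => ((D w (Pi.single ν Complex.I) : ℝ) : ℂ)) z :=
      Complex.ofRealCLM.differentiable.differentiableAt.comp z h2
    exact (h1'.add ((differentiableAt_const Complex.I).mul h2')).const_mul _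
  -- B agrees with wDbar of ρ on V
  have hBeq : ∀ ν, ∀ w ∈ V, wDbar (fun w' => (ρ w' : ℂ)) w ν = B ν w := by
    intro ν w hw
    rw [wDbar_ofReal (hdiff w hw).hasFDerivAt]
  -- the inverse function
  set invC : (Fin 2 → ℂ) → ℂ := fun w => ((ρ w)⁻¹ : ℝ) with hinvCdef
  have hinvD : HasFDerivAt (fun w => (ρ w)⁻¹)
      (((-ContinuousLinearMap.mulLeftRight ℝ ℝ (ρ z)⁻¹ (ρ z)⁻¹)).comp (D z)) z :=
    (hasFDerivAt_inv' hpos.ne').comp z hρz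
  have hinvCdiff : DifferentiableAt ℝ invC z :=
    Complex.ofRealCLM.differentiable.differentiableAt.comp z ((hdiff z hzV).inv hpos.ne')
  -- eventual equality for the log
  have hlogeq : ∀ ν, (fun w => wDbar (fun w' => ((Real.log (ρ w') : ℝ) : ℂ)) w ν)
      =ᶠ[nhds z] (fun w => invC w * B ν w) := by
    intro ν
    filter_upwards [hmem] with w hw
    have hρw : HasFDerivAt ρ (D w) w := (hdiff w hw).hasFDerivAt
    have hwpos : 0 < ρ w := hw.2
    have hlog : HasFDerivAt (fun x => Real.log (ρ x)) ((ρ w)⁻¹ • D w) w :=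
      hρw.log hwpos.ne'
    rw [wDbar_ofReal hlog]
    simp only [ContinuousLinearMap.coe_smul', Pi.smul_apply, smul_eq_mul, hBdef, hinvCdef]
    push_cast
    ring
  intro μ ν
  -- compute the entry
  have e1 : (levi (fun w => Real.log (ρ w)) z) μ ν
      = wD (fun w => invC w * B ν w) z μ := by
    show wD (fun w => wDbar (fun w' => ((Real.log (ρ w')) : ℂ)) w ν) z μ = _
    rw [wD_congr (hlogeq ν)]
  rw [e1, wD_mul hinvCdiff (hBdiff ν) μ]
  -- wD of invC
  have hinvfd : HasFDerivAt (fun w => (ρ w)⁻¹)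
      ((-(ρ z ^ 2)⁻¹) • D z) z := by
    refine hinvD.congr_fderiv ?_
    ext v
    simp only [ContinuousLinearMap.comp_apply, ContinuousLinearMap.coe_smul', Pi.smul_apply,
      smul_eq_mul, ContinuousLinearMap.neg_apply, ContinuousLinearMap.mulLeftRight_apply]
    rw [pow_two, mul_inv]
    ring
  have e2 : wD invC z μ = -(((ρ z : ℂ)) ^ 2)⁻¹ * wD (fun w => (ρ w : ℂ)) z μ := by
    rw [show invC = (fun w => (((ρ w)⁻¹ : ℝ) : ℂ)) from rfl]
    rw [wD_ofReal hinvfd, wD_ofReal hρz]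
    simp only [ContinuousLinearMap.coe_smul', Pi.smul_apply, smul_eq_mul]
    push_cast
    have : ((ρ z : ℂ)) ≠ 0 := by exact_mod_cast hpos.ne'
    field_simp
    ring
  have e3 : B ν z = wDbar (fun w => (ρ w : ℂ)) z ν := (hBeq ν z hzV).symm
  have e4 : wD (B ν) z μ = levi ρ z μ ν := by
    have : (fun w => wDbar (fun w' => (ρ w' : ℂ)) w ν) =ᶠ[nhds z] (B ν) := by
      filter_upwards [hmem] with w hw
      exact hBeq ν w hw
    show _ = wD (fun w => wDbar (fun w' => (ρ w' : ℂ)) w ν) z μ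
    rw [wD_congr this]
  have e5 : invC z = ((ρ z : ℂ))⁻¹ := by
    simp [hinvCdef]
  rw [e2, e3, e4, e5]
  ring

/-- At a strictly pseudoconvex point with `ρ > 0`, the function `log ρ` satisfies the
homogeneous complex Monge–Ampère equation at `z` iff the complex gradient satisfies
`Z(ρ) = ρ` at `z`. -/
theorem MongeAmpere_iff_Zrho_eq_rho (U : Set (Fin 2 → ℂ)) (hU : IsOpen U)
    (ρ : (Fin 2 → ℂ) → ℝ) (hρ : ContDiffOn ℝ 2 ρ U)
    (z : Fin 2 → ℂ) (hz : z ∈ U) (hpos : 0 < ρ z)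
    (hPD : (levi ρ z).PosDef)
    (Z : Fin 2 → ℂ)
    (hZ : ∀ ν : Fin 2, ∑ μ : Fin 2, Z μ * levi ρ z μ ν = wDbar (fun w => (ρ w : ℂ)) z ν) :
    (levi (fun w => Real.log (ρ w)) z).det = 0 ↔
      ∑ μ : Fin 2, Z μ * wD (fun w => (ρ w : ℂ)) z μ = (ρ z : ℂ) := by
  have hEntry := levi_log_entry U hU ρ hρ z hz hpos
  set r : ℂ := (ρ z : ℂ) with hrdef
  have hr : r ≠ 0 := by
    simp only [hrdef, ne_eq, Complex.ofReal_eq_zero]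
    exact hpos.ne'
  have hdet : (levi ρ z).det ≠ 0 := hPD.det_pos.ne'
  set L00 := levi ρ z 0 0; set L01 := levi ρ z 0 1
  set L10 := levi ρ z 1 0; set L11 := levi ρ z 1 1
  set v0 := wD (fun w => (ρ w : ℂ)) z 0; set v1 := wD (fun w => (ρ w : ℂ)) z 1
  set w0 := wDbar (fun w => (ρ w : ℂ)) z 0; set w1 := wDbar (fun w => (ρ w : ℂ)) z 1
  have hZ0 : Z 0 * L00 + Z 1 * L10 = w0 := by
    have := hZ 0; rwa [Fin.sum_univ_two] at this
  have hZ1 : Z 0 * L01 + Z 1 * L11 = w1 := by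
    have := hZ 1; rwa [Fin.sum_univ_two] at this
  have hdet' : L00 * L11 - L01 * L10 ≠ 0 := by
    rwa [Matrix.det_fin_two] at hdet
  rw [Matrix.det_fin_two, Fin.sum_univ_two]
  rw [hEntry 0 0, hEntry 0 1, hEntry 1 0, hEntry 1 1]
  have key : (r⁻¹ * L00 - (r ^ 2)⁻¹ * v0 * w0) * (r⁻¹ * L11 - (r ^ 2)⁻¹ * v1 * w1)
      - (r⁻¹ * L01 - (r ^ 2)⁻¹ * v0 * w1) * (r⁻¹ * L10 - (r ^ 2)⁻¹ * v1 * w0)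
      = (r ^ 3)⁻¹ * (L00 * L11 - L01 * L10) * (r - (Z 0 * v0 + Z 1 * v1)) := by
    rw [← hZ0, ← hZ1]
    field_simp
    ring
  rw [key]
  constructor
  · intro h
    rcases mul_eq_zero.1 h with h' | h'
    · rcases mul_eq_zero.1 h' with h'' | h''
      · exact absurd h'' (inv_ne_zero (pow_ne_zero 3 hr))
      · exact absurd h'' hdet'
    · exact (sub_eq_zero.mp h').symm
  · intro h
    rw [h]
    simp
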